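/- If in a short exact sequence 0 → (-, M) → G → (-, K) → 0 in ((R-mod)^op, Ab) the outer terms are restricted Hom functors of left R-modules M and K, then the middle term G is also isomorphic to (-, N) for some left R-module N. -/

import Mathlib

open CategoryTheory CategoryTheory.Limits

universe u
variable (R : Type u) [Ring R]

/-- The category of finitely presented left `R`-modules. -/
abbrev fpMod := ObjectProperty.FullSubcategory (fun M : ModuleCat.{u} R => Module.FinitePresentation R M)

/-- The ambient category of contravariant functors `((R-mod)ᵒᵖ, Ab)`. -/
abbrev CFun := (fpMod R)ᵒᵖ ⥤ AddCommGrpCat.{u}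

/-- The functor `Υ : R-Mod ⟶ ((R-mod)ᵒᵖ, Ab)`, `M ↦ Hom_R(-, M)` restricted to
finitely presented modules. -/
noncomputable def Upsilon : ModuleCat.{u} R ⥤ CFun R :=
  preadditiveYoneda ⋙ (Functor.whiskeringLeft _ _ _).obj (ObjectProperty.ι _).op

section Aux

variable {R}

/-- `R` as an object of `fpMod R`. -/
abbrev RR : fpMod R := ⟨ModuleCat.of R R, inferInstanceAs (Module.FinitePresentation R R)⟩

/-- The morphism `R → X`, `t ↦ t • a`. -/
def toSpan (X : fpMod R) (a : X.1) : (RR : fpMod R) ⟶ X :=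
  ObjectProperty.homMk (ModuleCat.ofHom (LinearMap.toSpanSingleton R X.1 a))

lemma fp_ext {X Y : fpMod R} {f g : X ⟶ Y} (h : ∀ t, f.hom.hom t = g.hom.hom t) : f = g := by
  apply ObjectProperty.hom_ext
  exact ModuleCat.hom_ext (LinearMap.ext h)

lemma toSpan_comp {X Y : fpMod R} (f : X ⟶ Y) (a : X.1) :
    toSpan X a ≫ f = toSpan Y (f.hom.hom a) := by
  refine fp_ext fun (t : R) => ?_
  show f.hom.hom (t • a) = t • _
  rw [map_smul]

lemma toSpan_add (X : fpMod R) (a b : X.1) :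
    toSpan X (a + b) = toSpan X a + toSpan X b := by
  refine fp_ext fun (t : R) => ?_
  exact smul_add t a b

lemma gmap_comp (G : CFun R) {X Y Z : fpMod R} (f : X ⟶ Y) (g : Y ⟶ Z)
    (x : G.obj (Opposite.op Z)) :
    G.map (f ≫ g).op x = G.map f.op (G.map g.op x) := by
  rw [op_comp, G.map_comp]
  rfl

variable (G : CFun R) (hG : G.Additive)

/-- The `R`-module structure on `G(R)`. -/
noncomputable def nModule : Module R (G.obj (Opposite.op (RR : fpMod R))) :=
  haveI := hG
  { smul := fun r x => G.map (toSpan RR r).op x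
    one_smul := fun x => by
      show G.map (toSpan RR (1 : R)).op x = x
      have h1 : toSpan (RR : fpMod R) (1 : R) = 𝟙 RR := by
        refine fp_ext fun (t : R) => ?_
        show t • (1 : R) = t
        simp
      rw [h1]
      simp
    mul_smul := fun r s x => by
      show G.map (toSpan RR (r * s)).op x
          = G.map (toSpan RR r).op (G.map (toSpan RR s).op x)
      rw [← gmap_comp, toSpan_comp]
      rfl
    smul_add := fun r x y => by
      show G.map (toSpan RR r).op (x + y)
          = G.map (toSpan RR r).op x + G.map (toSpan RR r).op y
      rw [map_add]
    smul_zero := fun r => by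
      show G.map (toSpan RR r).op 0 = 0
      rw [map_zero]
    add_smul := fun r s x => by
      show G.map (toSpan RR (r + s)).op x
          = G.map (toSpan RR r).op x + G.map (toSpan RR s).op x
      rw [toSpan_add, op_add, G.map_add]
      rfl
    zero_smul := fun x => by
      show G.map (toSpan RR (0 : R)).op x = 0
      have h0 : toSpan (RR : fpMod R) (0 : R) = 0 := by
        refine fp_ext fun (t : R) => ?_
        show t • (0 : R) = (0 : R)
        simp
      rw [h0, op_zero, G.map_zero]
      rfl }

/-- The module `N := G(R)`. -/
noncomputable abbrev NMod : ModuleCat.{u} R :=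
  @ModuleCat.of R _ (G.obj (Opposite.op (RR : fpMod R))) _ (nModule G hG)

noncomputable instance nmodInst : Module R (NMod G hG) := (NMod G hG).isModule

lemma nmod_smul_def (r : R) (x : NMod G hG) :
    r • x = G.map (toSpan RR r).op x := rfl

/-- The component of the natural map `ν : G ⟶ (-, N)`. -/
noncomputable def nuFun (X : fpMod R) (x : G.obj (Opposite.op X)) :
    X.1 →ₗ[R] NMod G hG where
  toFun a := G.map (toSpan X a).op x
  map_add' a b := by
    haveI := hG
    show G.map (toSpan X (a + b)).op x
        = G.map (toSpan X a).op x + G.map (toSpan X b).op x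
    rw [toSpan_add, op_add, G.map_add]
    rfl
  map_smul' r a := by
    simp only [RingHom.id_apply]
    show G.map (toSpan X (r • a)).op x
        = r • (show NMod G hG from G.map (toSpan X a).op x)
    rw [nmod_smul_def, ← gmap_comp, toSpan_comp]
    rfl

lemma nuFun_add (X : fpMod R) (x y : G.obj (Opposite.op X)) :
    nuFun G hG X (x + y) = nuFun G hG X x + nuFun G hG X y := by
  apply LinearMap.ext
  intro a
  show G.map (toSpan X a).op (x + y) = _
  rw [map_add]
  rfl

lemma nuFun_zero (X : fpMod R) : nuFun G hG X 0 = 0 := by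
  apply LinearMap.ext
  intro a
  show G.map (toSpan X a).op 0 = 0
  rw [map_zero]

/-- The natural transformation `ν : G ⟶ (-, N)`. -/
noncomputable def nu : G ⟶ (Upsilon R).obj (NMod G hG) where
  app X := AddCommGrpCat.ofHom
    { toFun := fun x => show X.unop.1 ⟶ NMod G hG from ModuleCat.ofHom (X := X.unop.1) (Y := NMod G hG) (nuFun G hG X.unop x)
      map_zero' := ModuleCat.hom_ext (nuFun_zero G hG X.unop)
      map_add' := fun x y => ModuleCat.hom_ext (nuFun_add G hG X.unop x y) }
  naturality X Y f := by
    refine AddCommGrpCat.ext fun x => ModuleCat.hom_ext (LinearMap.ext fun a => ?_)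
    show G.map (toSpan Y.unop a).op (G.map f x)
        = G.map (toSpan X.unop (f.unop.hom.hom a)).op x
    rw [← toSpan_comp f.unop a, show f = f.unop.op from rfl, ← gmap_comp]
    rfl


section SES

/-- Coercion of an element of `(-, M)(X)` to a linear map. -/
def asLin {M : ModuleCat.{u} R} {X : (fpMod R)ᵒᵖ} (g : ((Upsilon R).obj M).obj X) :
    X.unop.1 →ₗ[R] M := (show X.unop.1 ⟶ M from g).hom

lemma yext {M : ModuleCat.{u} R} {X : (fpMod R)ᵒᵖ} {f g : ((Upsilon R).obj M).obj X}
    (h : ∀ a, asLin f a = asLin g a) : f = g :=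
  ModuleCat.hom_ext (LinearMap.ext h)

variable {M K : ModuleCat.{u} R} (i : (Upsilon R).obj M ⟶ G) (p : G ⟶ (Upsilon R).obj K)

/-- naturality of `i`, applied to elements. -/
lemma inat (X : (fpMod R)ᵒᵖ) (a : X.unop.1) (y : ((Upsilon R).obj M).obj X) :
    i.app (Opposite.op (RR : fpMod R)) (((Upsilon R).obj M).map (toSpan X.unop a).op y)
      = G.map (toSpan X.unop a).op (i.app X y) :=
  congrArg (fun (φ : ((Upsilon R).obj M).obj X ⟶ G.obj (Opposite.op (RR : fpMod R))) => φ y)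
    (i.naturality (toSpan X.unop a).op)

/-- naturality of `p`, applied to elements. -/
lemma pnat (X : (fpMod R)ᵒᵖ) (a : X.unop.1) (x : G.obj X) :
    p.app (Opposite.op (RR : fpMod R)) (G.map (toSpan X.unop a).op x)
      = ((Upsilon R).obj K).map (toSpan X.unop a).op (p.app X x) :=
  congrArg (fun (φ : G.obj X ⟶ ((Upsilon R).obj K).obj (Opposite.op (RR : fpMod R))) => φ x)
    (p.naturality (toSpan X.unop a).op)

/-- `t ↦ t • m` as an element of `(-, M)(R)`. -/
def tsM {M : ModuleCat.{u} R} (m : M) :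
    ((Upsilon R).obj M).obj (Opposite.op (RR : fpMod R)) :=
  show (RR : fpMod R).1 ⟶ M from ModuleCat.ofHom (LinearMap.toSpanSingleton R M m)

lemma asLin_tsM {M : ModuleCat.{u} R} (m : M) (t : R) : asLin (tsM m) t = t • m := rfl

/-- The map `ι : M →ₗ N` induced by `i`. -/
noncomputable def iotaL : M →ₗ[R] NMod G hG where
  toFun m := i.app (Opposite.op (RR : fpMod R)) (tsM m)
  map_add' m n := by
    have e : tsM (M := M) (m + n) = tsM m + tsM n := by
      refine yext fun (t : R) => ?_
      show t • (m + n) = t • m + t • n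
      rw [smul_add]
    show i.app (Opposite.op (RR : fpMod R)) (tsM (m + n)) = _
    rw [e, map_add]
  map_smul' r m := by
    simp only [RingHom.id_apply]
    show i.app (Opposite.op (RR : fpMod R)) (tsM (r • m))
        = r • (show NMod G hG from i.app (Opposite.op (RR : fpMod R)) (tsM m))
    rw [nmod_smul_def, ← inat G i (Opposite.op (RR : fpMod R)) r (tsM m)]
    have e2 : ((Upsilon R).obj M).map (toSpan (RR : fpMod R) r).op (tsM m) = tsM (r • m) := by
      refine yext fun (t : R) => ?_
      show (t • r) • m = t • (r • m)
      rw [smul_eq_mul, mul_smul]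
    rw [e2]

lemma iotaL_apply (m : M) :
    iotaL G hG i m = i.app (Opposite.op (RR : fpMod R)) (tsM m) := rfl

/-- The map `π : N →ₗ K` induced by `p`. -/
noncomputable def piL : NMod G hG →ₗ[R] K where
  toFun n := asLin (p.app (Opposite.op (RR : fpMod R)) n) (1 : R)
  map_add' n n' := by
    have e := map_add (ConcreteCategory.hom (p.app (Opposite.op (RR : fpMod R)))) n n'
    show asLin (p.app (Opposite.op (RR : fpMod R)) (n + n')) (1 : R)
        = asLin (p.app (Opposite.op (RR : fpMod R)) n) (1 : R)
          + asLin (p.app (Opposite.op (RR : fpMod R)) n') (1 : R)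
    rw [e]
    rfl
  map_smul' r n := by
    simp only [RingHom.id_apply]
    show asLin (p.app (Opposite.op (RR : fpMod R)) (r • n)) (1 : R)
        = r • asLin (p.app (Opposite.op (RR : fpMod R)) n) (1 : R)
    rw [nmod_smul_def, pnat G p (Opposite.op (RR : fpMod R)) r n]
    show asLin (p.app (Opposite.op (RR : fpMod R)) n) ((1 : R) • r)
        = r • asLin (p.app (Opposite.op (RR : fpMod R)) n) (1 : R)
    rw [one_smul]
    conv_lhs => rw [show r = r • (1 : R) by simp]
    rw [map_smul]

lemma piL_apply (n : NMod G hG) :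
    piL G hG p n = asLin (p.app (Opposite.op (RR : fpMod R)) n) (1 : R) := rfl

/-- left commuting square. -/
lemma sqA (X : (fpMod R)ᵒᵖ) (g : ((Upsilon R).obj M).obj X) (a : X.unop.1) :
    nuFun G hG X.unop (i.app X g) a = iotaL G hG i (asLin g a) := by
  show G.map (toSpan X.unop a).op (i.app X g) = _
  rw [← inat G i X a g, iotaL_apply]
  congr 1
  refine yext fun (t : R) => ?_
  show asLin g (t • a) = t • asLin g a
  rw [map_smul]

/-- right commuting square. -/
lemma sqB (X : (fpMod R)ᵒᵖ) (x : G.obj X) (a : X.unop.1) :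
    asLin (p.app X x) a = piL G hG p (nuFun G hG X.unop x a) := by
  rw [piL_apply]
  show _ = asLin (p.app (Opposite.op (RR : fpMod R)) (G.map (toSpan X.unop a).op x)) (1 : R)
  rw [pnat G p X a x]
  show asLin (p.app X x) a = asLin (p.app X x) ((1 : R) • a)
  rw [one_smul]

end SES

end Aux

/-- in a short exact sequence `0 → (-, M) → G → (-, K) → 0` in
`((R-mod)ᵒᵖ, Ab)` the middle term is again of the form `(-, N)`. -/
theorem stmt6 (M K : ModuleCat.{u} R) (G : CFun R) (hG : G.Additive)
    (i : (Upsilon R).obj M ⟶ G) (p : G ⟶ (Upsilon R).obj K) (w : i ≫ p = 0)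
    (h : (ShortComplex.mk i p w).ShortExact) :
    ∃ N : ModuleCat.{u} R, Nonempty (G ≅ (Upsilon R).obj N) := by
  classical
  refine ⟨NMod G hG, ⟨?_⟩⟩
  -- objectwise short exactness
  have hEval : ∀ X : (fpMod R)ᵒᵖ,
      ((ShortComplex.mk i p w).map ((evaluation _ _).obj X)).ShortExact :=
    fun X => h.map_of_exact _
  have inj_i : ∀ X : (fpMod R)ᵒᵖ, Function.Injective (i.app X) :=
    fun X => (hEval X).ab_injective_f
  have surj_p : ∀ X : (fpMod R)ᵒᵖ, Function.Surjective (p.app X) :=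
    fun X => (hEval X).ab_surjective_g
  have exact_mid : ∀ (X : (fpMod R)ᵒᵖ) (x : G.obj X), p.app X x = 0 →
      ∃ g, i.app X g = x := fun X x hx =>
    (ShortComplex.ab_exact_iff _).1 (hEval X).exact x hx
  -- `ι` is injective
  have inj_iota : Function.Injective (iotaL G hG i) := by
    intro m m' hmm'
    have h2 : tsM (M := M) m = tsM m' :=
      inj_i (Opposite.op (RR : fpMod R)) hmm'
    calc m = asLin (tsM (M := M) m) (1 : R) := (one_smul R m).symm
      _ = asLin (tsM (M := M) m') (1 : R) := by rw [h2]
      _ = m' := one_smul R m'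
  -- kernel of `π` is contained in the image of `ι`
  have ker_pi : ∀ n : NMod G hG, piL G hG p n = 0 → ∃ m : M, iotaL G hG i m = n := by
    intro n hn
    have hp0 : p.app (Opposite.op (RR : fpMod R)) n = 0 := by
      refine yext fun (t : R) => ?_
      show asLin (p.app (Opposite.op (RR : fpMod R)) n) t = 0
      have : asLin (p.app (Opposite.op (RR : fpMod R)) n) (t • (1 : R))
          = t • asLin (p.app (Opposite.op (RR : fpMod R)) n) (1 : R) := map_smul _ t _
      rw [smul_eq_mul, mul_one] at this
      rw [this]
      rw [show asLin (p.app (Opposite.op (RR : fpMod R)) n) (1 : R) = piL G hG p n from rfl, hn,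
        smul_zero]
    obtain ⟨g, hg⟩ := exact_mid (Opposite.op (RR : fpMod R)) n hp0
    refine ⟨asLin g (1 : R), ?_⟩
    rw [iotaL_apply, ← hg]
    congr 1
    refine yext fun (t : R) => ?_
    show t • asLin g (1 : R) = asLin g t
    rw [← map_smul, smul_eq_mul, mul_one]
  -- each component of `ν` is an isomorphism
  haveI : ∀ X : (fpMod R)ᵒᵖ, IsIso ((nu G hG).app X) := by
    intro X
    rw [ConcreteCategory.isIso_iff_bijective]
    constructor
    · -- injectivity
      refine (injective_iff_map_eq_zero _).2 (fun x hx => ?_)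
      have hfun : nuFun G hG X.unop x = 0 := congrArg ModuleCat.Hom.hom hx
      have hpx : p.app X x = 0 := by
        refine yext fun a => ?_
        show asLin (p.app X x) a = 0
        rw [sqB G hG p X x a, hfun]
        show piL G hG p ((0 : X.unop.1 →ₗ[R] NMod G hG) a) = 0
        rw [LinearMap.zero_apply, map_zero]
      obtain ⟨g, hg⟩ := exact_mid X x hpx
      have hgz : g = 0 := by
        refine yext fun a => ?_
        show asLin g a = (0 : X.unop.1 →ₗ[R] M) a
        rw [LinearMap.zero_apply]
        apply inj_iota
        rw [map_zero]
        have hA := sqA G hG i X g a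
        rw [hg, hfun] at hA
        rw [← hA]
        show (0 : X.unop.1 →ₗ[R] NMod G hG) a = 0
        rw [LinearMap.zero_apply]
      rw [← hg, hgz, map_zero]
    · -- surjectivity
      intro f
      obtain ⟨x, hx⟩ := surj_p X
        (show ((Upsilon R).obj K).obj X from
          ModuleCat.ofHom ((piL G hG p).comp (show X.unop.1 ⟶ NMod G hG from f).hom))
      set fL : X.unop.1 →ₗ[R] NMod G hG := (show X.unop.1 ⟶ NMod G hG from f).hom with hfL
      set d : X.unop.1 →ₗ[R] NMod G hG := fL - nuFun G hG X.unop x with hd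
      have hdmem : ∀ a : X.unop.1, ∃ m : M, iotaL G hG i m = d a := by
        intro a
        apply ker_pi
        rw [hd, LinearMap.sub_apply, map_sub]
        have h1 := sqB G hG p X x a
        have h2 : asLin (p.app X x) a = piL G hG p (fL a) := by
          rw [hx]
          rfl
        rw [← h1, h2, sub_self]
      choose mm hmm using hdmem
      have mm_add : ∀ a b : X.unop.1, mm (a + b) = mm a + mm b := fun a b => by
        apply inj_iota
        rw [hmm, map_add, map_add, hmm, hmm]
      have mm_smul : ∀ (r : R) (a : X.unop.1), mm (r • a) = r • mm a := fun r a => by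
        apply inj_iota
        rw [hmm, map_smul, map_smul, hmm]
      set gL : X.unop.1 →ₗ[R] M :=
        { toFun := mm
          map_add' := mm_add
          map_smul' := fun r a => by simp only [RingHom.id_apply]; exact mm_smul r a } with hgL
      refine ⟨x + i.app X (show ((Upsilon R).obj M).obj X from ModuleCat.ofHom gL), ?_⟩
      apply ModuleCat.hom_ext
      show nuFun G hG X.unop (x + i.app X (show ((Upsilon R).obj M).obj X from ModuleCat.ofHom gL)) = fL
      rw [nuFun_add]
      refine LinearMap.ext fun a => ?_
      rw [LinearMap.add_apply]
      have hAA := sqA G hG i X (show ((Upsilon R).obj M).obj X from ModuleCat.ofHom gL) a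
      rw [hAA]
      show nuFun G hG X.unop x a + iotaL G hG i (mm a) = fL a
      rw [hmm, hd, LinearMap.sub_apply]
      abel
  haveI := NatIso.isIso_of_isIso_app (nu G hG)
  exact asIso (nu G hG)
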